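/- Let f be a morphism of cosetal extensions of monoids with fixed kernel N and cokernel H (f ∘ k₁ = k₂, e₂ ∘ f = e₁). If E₁, E₂ are the H-indexed equivalence relations associated to the two extensions (n ∼^h n' iff k_i(n)·s(h) = k_i(n')·s(h) for a set-theoretic section s of e_i), then E₁ ⊆ E₂. -/
import Mathlib

/-- If f is a morphism of cosetal extensions of monoids with kernel N (an
abelian group) and cokernel H, and E₁, E₂ are the H-indexed equivalence relations associated
to the two extensions via set-theoretic sections, then E₁ ⊆ E₂. -/
theorem morphism_cosetal_eqv_subset {N G₁ G₂ H : Type*} [CommGroup N] [Monoid G₁] [Monoid G₂]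
    [Monoid H]
    (k₁ : N →* G₁) (e₁ : G₁ →* H) (k₂ : N →* G₂) (e₂ : G₂ →* H) (f : G₁ →* G₂)
    (hfk : ∀ n, f (k₁ n) = k₂ n) (hef : ∀ g, e₂ (f g) = e₁ g)
    (hcos₁ : ∀ g g' : G₁, e₁ g = e₁ g' → ∃ n : N, g = k₁ n * g')
    (hcos₂ : ∀ g g' : G₂, e₂ g = e₂ g' → ∃ n : N, g = k₂ n * g')
    (s₁ : H → G₁) (hs₁ : ∀ h, e₁ (s₁ h) = h)
    (s₂ : H → G₂) (hs₂ : ∀ h, e₂ (s₂ h) = h) :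
    ∀ (h : H) (n n' : N), k₁ n * s₁ h = k₁ n' * s₁ h → k₂ n * s₂ h = k₂ n' * s₂ h := by
  intro h n n' heq
  obtain ⟨m, hm⟩ : ∃ m : N, f (s₁ h) = k₂ m * s₂ h := by
    apply hcos₂
    rw [hef, hs₁, hs₂]
  have := congrArg f heq
  simp only [map_mul, hfk, hm] at this
  have key : k₂ m * (k₂ n * s₂ h) = k₂ m * (k₂ n' * s₂ h) := by
    calc k₂ m * (k₂ n * s₂ h) = k₂ n * (k₂ m * s₂ h) := by
          rw [← mul_assoc, ← mul_assoc, ← map_mul, ← map_mul, mul_comm m n]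
      _ = k₂ n' * (k₂ m * s₂ h) := this
      _ = k₂ m * (k₂ n' * s₂ h) := by
          rw [← mul_assoc, ← mul_assoc, ← map_mul, ← map_mul, mul_comm m n']
  have := congrArg (fun x => k₂ m⁻¹ * x) key
  simpa [← mul_assoc, ← map_mul] using this
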